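/- For any monotone submodular function f on subsets of [n] and any x ∈ [0,1]^n, the multilinear extension, concave closure, and relaxation f* satisfy F(x) ≤ f⁺(x) ≤ f*(x) ≤ (1 − 1/e)^{-1}·F(x). -/

import Mathlib

open Finset

def Submodular {n : ℕ} (f : Finset (Fin n) → ℝ) : Prop :=
  ∀ S T : Finset (Fin n), f (S ∪ T) + f (S ∩ T) ≤ f S + f T

noncomputable def multilinear {n : ℕ} (f : Finset (Fin n) → ℝ) (x : Fin n → ℝ) : ℝ :=
  ∑ S : Finset (Fin n), (∏ i ∈ S, x i) * (∏ i ∈ Sᶜ, (1 - x i)) * f S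

/-- Concave closure: supremum over distributions with marginals x of the expected value. -/
noncomputable def fplus {n : ℕ} (f : Finset (Fin n) → ℝ) (x : Fin n → ℝ) : ℝ :=
  sSup {y : ℝ | ∃ α : Finset (Fin n) → ℝ,
    (∀ S, 0 ≤ α S) ∧ (∑ S : Finset (Fin n), α S = 1) ∧
    (∀ i, ∑ S ∈ Finset.univ.filter (fun S => i ∈ S), α S = x i) ∧
    y = ∑ S : Finset (Fin n), α S * f S}

noncomputable def fstar {n : ℕ} (f : Finset (Fin n) → ℝ) (x : Fin n → ℝ) : ℝ :=
  (Finset.univ : Finset (Finset (Fin n))).inf' ⟨∅, Finset.mem_univ _⟩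
    (fun S => f S + ∑ i ∈ Sᶜ, (f (insert i S) - f S) * x i)

/-! ### Auxiliary lemmas -/

lemma sum_prod_compl {n : ℕ} (a b : Fin n → ℝ) :
    ∑ S : Finset (Fin n), (∏ i ∈ S, a i) * (∏ i ∈ Sᶜ, b i) = ∏ i, (a i + b i) := by
  rw [Finset.prod_add, Finset.powerset_univ]
  refine Finset.sum_congr rfl fun S _ => ?_
  rw [Finset.compl_eq_univ_sdiff]

lemma sum_insert_reindex {n : ℕ} (i : Fin n) (h : Finset (Fin n) → ℝ) :
    ∑ S ∈ ((Finset.univ : Finset (Finset (Fin n))).filter (fun S => i ∈ S)), h (S.erase i)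
      = ∑ A ∈ ((Finset.univ : Finset (Finset (Fin n))).filter (fun A => i ∉ A)), h A := by
  refine Finset.sum_bij' (fun (S : Finset (Fin n)) (_ : S ∈ ((Finset.univ : Finset (Finset (Fin n))).filter (fun S => i ∈ S))) => Finset.erase S i)
    (fun (A : Finset (Fin n)) (_ : A ∈ ((Finset.univ : Finset (Finset (Fin n))).filter (fun A => i ∉ A))) => insert i A)
    ?_ ?_ ?_ ?_ ?_
  · intro S hS; simp
  · intro A hA; simp
  · intro S hS
    simp only [Finset.mem_filter, Finset.mem_univ, true_and] at hS
    exact Finset.insert_erase hS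
  · intro A hA
    simp only [Finset.mem_filter, Finset.mem_univ, true_and] at hA
    exact Finset.erase_insert hA
  · intro S hS; rfl

lemma swap_mem {n : ℕ} (h : Finset (Fin n) → Fin n → ℝ) :
    ∑ S : Finset (Fin n), ∑ i ∈ S, h S i
      = ∑ i : Fin n, ∑ S ∈ ((Finset.univ : Finset (Finset (Fin n))).filter (fun S => i ∈ S)), h S i := by
  have key : ∀ S : Finset (Fin n), ∑ i ∈ S, h S i
      = ∑ i : Fin n, if i ∈ S then h S i else 0 := by
    intro S
    rw [Finset.sum_ite_mem, Finset.univ_inter]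
  simp_rw [key]
  rw [Finset.sum_comm]
  exact Finset.sum_congr rfl fun i _ => (Finset.sum_filter _ _).symm

lemma swap_compl {n : ℕ} (h : Finset (Fin n) → Fin n → ℝ) :
    ∑ S : Finset (Fin n), ∑ i ∈ Sᶜ, h S i
      = ∑ i : Fin n, ∑ S ∈ ((Finset.univ : Finset (Finset (Fin n))).filter (fun S => i ∉ S)), h S i := by
  have key : ∀ S : Finset (Fin n), ∑ i ∈ Sᶜ, h S i
      = ∑ i : Fin n, if i ∉ S then h S i else 0 := by
    intro S
    rw [← Finset.sum_filter]
    apply Finset.sum_congr _ (fun _ _ => rfl)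
    ext j; simp
  simp_rw [key]
  rw [Finset.sum_comm]
  exact Finset.sum_congr rfl fun i _ => (Finset.sum_filter _ _).symm

lemma compl_erase_of_not_mem {n : ℕ} {i : Fin n} {A : Finset (Fin n)} (h : i ∉ A) :
    (Aᶜ).erase i = (Finset.univ.erase i) \ A := by
  ext j
  simp only [Finset.mem_erase, Finset.mem_compl, Finset.mem_sdiff, Finset.mem_univ, true_and]
  tauto

lemma compl_erase_insert {n : ℕ} {i : Fin n} {S : Finset (Fin n)} (h : i ∈ S) :
    ((S.erase i)ᶜ).erase i = Sᶜ := by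
  ext j
  simp only [Finset.mem_erase, Finset.mem_compl]
  constructor
  · rintro ⟨hji, hj⟩ hjS
    exact hj ⟨hji, hjS⟩
  · intro hj
    refine ⟨?_, fun hc => hj hc.2⟩
    rintro rfl; exact hj h

lemma filter_not_mem_eq_powerset {n : ℕ} (i : Fin n) :
    Finset.univ.filter (fun A : Finset (Fin n) => i ∉ A) = (Finset.univ.erase i).powerset := by
  ext A
  simp [Finset.subset_erase]

lemma marginal_eq {n : ℕ} (a b : Fin n → ℝ) (i : Fin n) :
    ∑ S ∈ ((Finset.univ : Finset (Finset (Fin n))).filter (fun S => i ∈ S)), (∏ j ∈ S, a j) * (∏ j ∈ Sᶜ, b j)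
      = a i * ∏ j ∈ Finset.univ.erase i, (a j + b j) := by
  have step1 : ∑ S ∈ ((Finset.univ : Finset (Finset (Fin n))).filter (fun S => i ∈ S)), (∏ j ∈ S, a j) * (∏ j ∈ Sᶜ, b j)
      = ∑ S ∈ ((Finset.univ : Finset (Finset (Fin n))).filter (fun S => i ∈ S)),
          (fun A => a i * ((∏ j ∈ A, a j) * (∏ j ∈ (Aᶜ).erase i, b j))) (S.erase i) := by
    refine Finset.sum_congr rfl fun S hS => ?_
    simp only [Finset.mem_filter, Finset.mem_univ, true_and] at hS
    have h1 : ∏ j ∈ S, a j = a i * ∏ j ∈ S.erase i, a j :=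
      (Finset.mul_prod_erase S a hS).symm
    dsimp only
    rw [compl_erase_insert hS, h1]; ring
  rw [step1, sum_insert_reindex i (fun A => a i * ((∏ j ∈ A, a j) * ∏ j ∈ (Aᶜ).erase i, b j)), ← Finset.mul_sum]
  congr 1
  rw [Finset.prod_add, filter_not_mem_eq_powerset]
  refine Finset.sum_congr rfl fun A hA => ?_
  rw [Finset.mem_powerset] at hA
  have hiA : i ∉ A := fun h => (Finset.mem_erase.mp (hA h)).1 rfl
  rw [compl_erase_of_not_mem hiA]

lemma submod_bound {n : ℕ} (f : Finset (Fin n) → ℝ) (hf : Submodular f)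
    (S : Finset (Fin n)) (A : Finset (Fin n)) (hd : Disjoint A S) :
    f (S ∪ A) ≤ f S + ∑ i ∈ A, (f (insert i S) - f S) := by
  induction A using Finset.induction_on with
  | empty => simp
  | @insert a A ha ih =>
    have hd' : Disjoint A S := Disjoint.mono_left (Finset.subset_insert a A) hd
    have haS : a ∉ S := fun h => (Finset.disjoint_left.mp hd) (Finset.mem_insert_self a A) h
    have haSA : a ∉ S ∪ A := by simp [haS, ha]
    have key := hf (S ∪ A) (insert a S)
    have e1 : (S ∪ A) ∪ insert a S = S ∪ insert a A := by
      ext j; simp [Finset.mem_insert, Finset.mem_union]; tauto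
    have e2 : (S ∪ A) ∩ insert a S = S := by
      ext j
      simp only [Finset.mem_inter, Finset.mem_union, Finset.mem_insert]
      constructor
      · rintro ⟨h1, h2⟩
        rcases h2 with rfl | h2
        · rcases h1 with h1 | h1
          · exact h1
          · exact absurd h1 ha
        · exact h2
      · intro h; exact ⟨Or.inl h, Or.inr h⟩
    rw [e1, e2] at key
    rw [Finset.sum_insert ha]
    have := ih hd'
    linarith

noncomputable def gprod {n : ℕ} (x : Fin n → ℝ) (S : Finset (Fin n)) (t : ℝ) : ℝ :=
  (∏ i ∈ S, t * x i) * (∏ i ∈ Sᶜ, (1 - t * x i))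

noncomputable def gd {n : ℕ} (x : Fin n → ℝ) (S : Finset (Fin n)) (t : ℝ) : ℝ :=
  (∑ i ∈ S, (∏ j ∈ S.erase i, t * x j) * x i) * (∏ i ∈ Sᶜ, (1 - t * x i))
    + (∏ i ∈ S, t * x i) * (∑ i ∈ Sᶜ, (∏ j ∈ Sᶜ.erase i, (1 - t * x j)) * (-x i))

lemma hasDeriv_gprod {n : ℕ} (x : Fin n → ℝ) (S : Finset (Fin n)) (t : ℝ) :
    HasDerivAt (gprod x S) (gd x S t) t := by
  have h1 : HasDerivAt (fun t : ℝ => ∏ i ∈ S, t * x i)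
      (∑ i ∈ S, (∏ j ∈ S.erase i, t * x j) * x i) t := by
    have := HasDerivAt.fun_finsetProd (u := S) (f := fun i (t : ℝ) => t * x i)
      (f' := fun i => x i) (x := t)
      (fun i _ => by simpa using (hasDerivAt_id t).mul_const (x i))
    simpa [smul_eq_mul, one_mul] using this
  have h2 : HasDerivAt (fun t : ℝ => ∏ i ∈ Sᶜ, (1 - t * x i))
      (∑ i ∈ Sᶜ, (∏ j ∈ Sᶜ.erase i, (1 - t * x j)) * (-x i)) t := by
    have := HasDerivAt.fun_finsetProd (u := Sᶜ) (f := fun i (t : ℝ) => 1 - t * x i)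
      (f' := fun i => -x i) (x := t)
      (fun i _ => by simpa using ((hasDerivAt_id t).mul_const (x i)).const_sub 1)
    simpa [smul_eq_mul, one_mul] using this
  exact h1.mul h2

noncomputable def phi {n : ℕ} (f : Finset (Fin n) → ℝ) (x : Fin n → ℝ) (t : ℝ) : ℝ :=
  ∑ S : Finset (Fin n), gprod x S t * f S

lemma hasDeriv_phi {n : ℕ} (f : Finset (Fin n) → ℝ) (x : Fin n → ℝ) (t : ℝ) :
    HasDerivAt (phi f x) (∑ S : Finset (Fin n), gd x S t * f S) t := by
  have : ∀ S ∈ (Finset.univ : Finset (Finset (Fin n))),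
      HasDerivAt (fun t => gprod x S t * f S) (gd x S t * f S) t :=
    fun S _ => (hasDeriv_gprod x S t).mul_const (f S)
  exact HasDerivAt.fun_sum this
noncomputable def qprod {n : ℕ} (x : Fin n → ℝ) (i : Fin n) (A : Finset (Fin n)) (t : ℝ) : ℝ :=
  (∏ j ∈ A, t * x j) * (∏ j ∈ (Aᶜ).erase i, (1 - t * x j))

lemma gd_identity {n : ℕ} (f : Finset (Fin n) → ℝ) (x : Fin n → ℝ) (t : ℝ) :
    ∑ S : Finset (Fin n), gd x S t * f S
      = ∑ i : Fin n, x i * ∑ A ∈ ((Finset.univ : Finset (Finset (Fin n))).filter (fun A => i ∉ A)),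
          qprod x i A t * (f (insert i A) - f A) := by
  have step1 : ∀ S : Finset (Fin n), gd x S t * f S
      = (∑ i ∈ S, x i * (qprod x i (S.erase i) t * f S))
        - ∑ i ∈ Sᶜ, x i * (qprod x i S t * f S) := by
    intro S
    have e1 : ∀ i ∈ S, x i * (qprod x i (S.erase i) t * f S)
        = ((∏ j ∈ S.erase i, t * x j) * x i) * ((∏ j ∈ Sᶜ, (1 - t * x j)) * f S) := by
      intro i hi
      unfold qprod
      rw [compl_erase_insert hi]
      ring
    have e2 : ∀ i ∈ Sᶜ, x i * (qprod x i S t * f S)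
        = ((∏ j ∈ Sᶜ.erase i, (1 - t * x j)) * (- x i)) * (-((∏ j ∈ S, t * x j) * f S)) := by
      intro i _
      unfold qprod
      ring
    rw [Finset.sum_congr rfl e1, Finset.sum_congr rfl e2, ← Finset.sum_mul, ← Finset.sum_mul]
    unfold gd
    ring
  calc ∑ S : Finset (Fin n), gd x S t * f S
      = (∑ S : Finset (Fin n), ∑ i ∈ S, x i * (qprod x i (S.erase i) t * f S))
        - ∑ S : Finset (Fin n), ∑ i ∈ Sᶜ, x i * (qprod x i S t * f S) := by
        rw [← Finset.sum_sub_distrib]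
        exact Finset.sum_congr rfl fun S _ => step1 S
    _ = (∑ i : Fin n, ∑ S ∈ ((Finset.univ : Finset (Finset (Fin n))).filter (fun S => i ∈ S)),
          x i * (qprod x i (S.erase i) t * f S))
        - ∑ i : Fin n, ∑ S ∈ ((Finset.univ : Finset (Finset (Fin n))).filter (fun S => i ∉ S)),
          x i * (qprod x i S t * f S) := by
        rw [swap_mem (fun S i => x i * (qprod x i (S.erase i) t * f S)),
          swap_compl (fun S i => x i * (qprod x i S t * f S))]
    _ = (∑ i : Fin n, ∑ A ∈ ((Finset.univ : Finset (Finset (Fin n))).filter (fun A => i ∉ A)),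
          x i * (qprod x i A t * f (insert i A)))
        - ∑ i : Fin n, ∑ S ∈ ((Finset.univ : Finset (Finset (Fin n))).filter (fun S => i ∉ S)),
          x i * (qprod x i S t * f S) := by
        congr 1
        refine Finset.sum_congr rfl fun i _ => ?_
        rw [← sum_insert_reindex i (fun A => x i * (qprod x i A t * f (insert i A)))]
        refine Finset.sum_congr rfl fun S hS => ?_
        simp only [Finset.mem_filter, Finset.mem_univ, true_and] at hS
        rw [Finset.insert_erase hS]
    _ = ∑ i : Fin n, x i * ∑ A ∈ ((Finset.univ : Finset (Finset (Fin n))).filter (fun A => i ∉ A)),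
          qprod x i A t * (f (insert i A) - f A) := by
        rw [← Finset.sum_sub_distrib]
        refine Finset.sum_congr rfl fun i _ => ?_
        rw [Finset.mul_sum, ← Finset.sum_sub_distrib]
        refine Finset.sum_congr rfl fun A _ => ?_
        ring

lemma key_ineq {n : ℕ} (f : Finset (Fin n) → ℝ)
    (hmono : ∀ S T : Finset (Fin n), S ⊆ T → f S ≤ f T)
    (x : Fin n → ℝ) (hx : ∀ i, 0 ≤ x i ∧ x i ≤ 1)
    (t : ℝ) (ht0 : 0 ≤ t) (ht1 : t ≤ 1) :
    fstar f x - phi f x t ≤ ∑ S : Finset (Fin n), gd x S t * f S := by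
  have hax : ∀ i, 0 ≤ t * x i ∧ t * x i ≤ 1 := by
    intro i
    constructor
    · exact mul_nonneg ht0 (hx i).1
    · nlinarith [(hx i).1, (hx i).2]
  have hb : ∀ i, 0 ≤ 1 - t * x i := fun i => by linarith [(hax i).2]
  have hg0 : ∀ S : Finset (Fin n), 0 ≤ gprod x S t := by
    intro S
    exact mul_nonneg (Finset.prod_nonneg fun i _ => (hax i).1)
      (Finset.prod_nonneg fun i _ => hb i)
  have hq0 : ∀ (i : Fin n) (A : Finset (Fin n)), 0 ≤ qprod x i A t := by
    intro i A
    exact mul_nonneg (Finset.prod_nonneg fun j _ => (hax j).1)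
      (Finset.prod_nonneg fun j _ => hb j)
  have hsum1 : ∑ S : Finset (Fin n), gprod x S t = 1 := by
    unfold gprod
    rw [sum_prod_compl (fun i => t * x i) (fun i => 1 - t * x i)]
    rw [Finset.prod_congr rfl (fun i _ => by ring : ∀ i ∈ Finset.univ,
      t * x i + (1 - t * x i) = (1:ℝ))]
    exact Finset.prod_const_one
  have hc : ∀ S : Finset (Fin n),
      fstar f x ≤ f S + ∑ i ∈ Sᶜ, (f (insert i S) - f S) * x i :=
    fun S => Finset.inf'_le _ (Finset.mem_univ S)
  have step0 : fstar f x - phi f x t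
      = ∑ S : Finset (Fin n), gprod x S t * (fstar f x - f S) := by
    unfold phi
    rw [Finset.sum_congr rfl (fun S _ => mul_sub (gprod x S t) (fstar f x) (f S)),
      Finset.sum_sub_distrib, ← Finset.sum_mul, hsum1, one_mul]
  have step1 : fstar f x - phi f x t
      ≤ ∑ S : Finset (Fin n), gprod x S t * (∑ i ∈ Sᶜ, (f (insert i S) - f S) * x i) := by
    rw [step0]
    refine Finset.sum_le_sum fun S _ => ?_
    exact mul_le_mul_of_nonneg_left (by linarith [hc S]) (hg0 S)
  have step2 : ∑ S : Finset (Fin n), gprod x S t * (∑ i ∈ Sᶜ, (f (insert i S) - f S) * x i)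
      = ∑ i : Fin n, ∑ S ∈ ((Finset.univ : Finset (Finset (Fin n))).filter (fun S => i ∉ S)),
          gprod x S t * ((f (insert i S) - f S) * x i) := by
    rw [← swap_compl (fun S i => gprod x S t * ((f (insert i S) - f S) * x i))]
    exact Finset.sum_congr rfl fun S _ => by rw [Finset.mul_sum]
  have step3 : ∀ i : Fin n, ∀ A ∈ ((Finset.univ : Finset (Finset (Fin n))).filter
      (fun A => i ∉ A)),
      gprod x A t * ((f (insert i A) - f A) * x i)
        ≤ x i * (qprod x i A t * (f (insert i A) - f A)) := by
    intro i A hA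
    simp only [Finset.mem_filter, Finset.mem_univ, true_and] at hA
    have hd : 0 ≤ f (insert i A) - f A :=
      sub_nonneg.mpr (hmono A (insert i A) (Finset.subset_insert i A))
    have hgq : gprod x A t = (1 - t * x i) * qprod x i A t := by
      unfold gprod qprod
      rw [← Finset.mul_prod_erase Aᶜ _ (Finset.mem_compl.mpr hA)]
      ring
    have hqd : 0 ≤ qprod x i A t * (f (insert i A) - f A) := mul_nonneg (hq0 i A) hd
    calc gprod x A t * ((f (insert i A) - f A) * x i)
        = x i * ((1 - t * x i) * (qprod x i A t * (f (insert i A) - f A))) := by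
          rw [hgq]; ring
      _ ≤ x i * (qprod x i A t * (f (insert i A) - f A)) := by
          refine mul_le_mul_of_nonneg_left ?_ (hx i).1
          exact mul_le_of_le_one_left hqd (by linarith [(hax i).1])
  calc fstar f x - phi f x t
      ≤ ∑ i : Fin n, ∑ S ∈ ((Finset.univ : Finset (Finset (Fin n))).filter (fun S => i ∉ S)),
          gprod x S t * ((f (insert i S) - f S) * x i) := by rw [← step2]; exact step1
    _ ≤ ∑ i : Fin n, x i * ∑ A ∈ ((Finset.univ : Finset (Finset (Fin n))).filter
          (fun A => i ∉ A)), qprod x i A t * (f (insert i A) - f A) := by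
        refine Finset.sum_le_sum fun i _ => ?_
        rw [Finset.mul_sum]
        exact Finset.sum_le_sum (step3 i)
    _ = ∑ S : Finset (Fin n), gd x S t * f S := (gd_identity f x t).symm

theorem stmt_14 {n : ℕ} (f : Finset (Fin n) → ℝ) (hf : Submodular f)
    (hnonneg : ∀ S, 0 ≤ f S) (hmono : ∀ S T : Finset (Fin n), S ⊆ T → f S ≤ f T)
    (x : Fin n → ℝ) (hx : ∀ i, 0 ≤ x i ∧ x i ≤ 1) :
    multilinear f x ≤ fplus f x ∧ fplus f x ≤ fstar f x ∧
      fstar f x ≤ (1 - 1 / Real.exp 1)⁻¹ * multilinear f x := by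
  classical
  set Y : Set ℝ := {y : ℝ | ∃ α : Finset (Fin n) → ℝ,
    (∀ S, 0 ≤ α S) ∧ (∑ S : Finset (Fin n), α S = 1) ∧
    (∀ i, ∑ S ∈ Finset.univ.filter (fun S => i ∈ S), α S = x i) ∧
    y = ∑ S : Finset (Fin n), α S * f S} with hY
  -- the product distribution
  set α : Finset (Fin n) → ℝ := fun S => (∏ i ∈ S, x i) * (∏ i ∈ Sᶜ, (1 - x i)) with hα
  have hα0 : ∀ S, 0 ≤ α S := by
    intro S
    exact mul_nonneg (Finset.prod_nonneg fun i _ => (hx i).1)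
      (Finset.prod_nonneg fun i _ => by linarith [(hx i).2])
  have hα1 : ∑ S : Finset (Fin n), α S = 1 := by
    rw [hα, sum_prod_compl x (fun i => 1 - x i),
      Finset.prod_congr rfl (fun i _ => by ring : ∀ i ∈ Finset.univ,
        x i + (1 - x i) = (1:ℝ))]
    exact Finset.prod_const_one
  have hαm : ∀ i, ∑ S ∈ Finset.univ.filter (fun S => i ∈ S), α S = x i := by
    intro i
    rw [hα, marginal_eq x (fun i => 1 - x i) i,
      Finset.prod_congr rfl (fun j _ => by ring : ∀ j ∈ Finset.univ.erase i,
        x j + (1 - x j) = (1:ℝ)), Finset.prod_const_one, mul_one]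
  have hmem : multilinear f x ∈ Y := by
    refine ⟨α, hα0, hα1, hαm, ?_⟩
    rfl
  have hbdd : BddAbove Y := by
    refine ⟨f Finset.univ, fun y hy => ?_⟩
    obtain ⟨β, hβ0, hβ1, _, rfl⟩ := hy
    calc ∑ S : Finset (Fin n), β S * f S
        ≤ ∑ S : Finset (Fin n), β S * f Finset.univ :=
          Finset.sum_le_sum fun S _ =>
            mul_le_mul_of_nonneg_left (hmono S Finset.univ (Finset.subset_univ S)) (hβ0 S)
      _ = f Finset.univ := by rw [← Finset.sum_mul, hβ1, one_mul]
  refine ⟨le_csSup hbdd hmem, ?_, ?_⟩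
  · -- fplus ≤ fstar
    refine csSup_le ⟨multilinear f x, hmem⟩ fun y hy => ?_
    obtain ⟨β, hβ0, hβ1, hβm, rfl⟩ := hy
    refine Finset.le_inf' _ _ fun S _ => ?_
    have hTbound : ∀ T : Finset (Fin n),
        f T ≤ f S + ∑ i ∈ T \ S, (f (insert i S) - f S) := by
      intro T
      calc f T ≤ f (S ∪ T) := hmono T (S ∪ T) Finset.subset_union_right
        _ = f (S ∪ (T \ S)) := by rw [Finset.union_sdiff_self_eq_union]
        _ ≤ f S + ∑ i ∈ T \ S, (f (insert i S) - f S) :=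
            submod_bound f hf S (T \ S) Finset.sdiff_disjoint
    have hswap : ∑ T : Finset (Fin n), β T * ∑ i ∈ T \ S, (f (insert i S) - f S)
        = ∑ i ∈ Sᶜ, (f (insert i S) - f S) * x i := by
      have e1 : ∀ T : Finset (Fin n), β T * ∑ i ∈ T \ S, (f (insert i S) - f S)
          = ∑ i ∈ Sᶜ, (if i ∈ T then β T * (f (insert i S) - f S) else 0) := by
        intro T
        rw [← Finset.sum_filter]
        have : Sᶜ.filter (fun i => i ∈ T) = T \ S := by
          ext j; simp [Finset.mem_sdiff, Finset.mem_compl, and_comm]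
        rw [this, Finset.mul_sum]
      rw [Finset.sum_congr rfl fun T _ => e1 T, Finset.sum_comm]
      refine Finset.sum_congr rfl fun i hi => ?_
      have : ∀ T : Finset (Fin n), (if i ∈ T then β T * (f (insert i S) - f S) else 0)
          = (if i ∈ T then β T else 0) * (f (insert i S) - f S) := by
        intro T; split <;> simp
      rw [Finset.sum_congr rfl fun T _ => this T, ← Finset.sum_mul, ← Finset.sum_filter,
        hβm i]
      ring
    calc ∑ T : Finset (Fin n), β T * f T
        ≤ ∑ T : Finset (Fin n), β T * (f S + ∑ i ∈ T \ S, (f (insert i S) - f S)) :=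
          Finset.sum_le_sum fun T _ => mul_le_mul_of_nonneg_left (hTbound T) (hβ0 T)
      _ = f S + ∑ i ∈ Sᶜ, (f (insert i S) - f S) * x i := by
          rw [Finset.sum_congr rfl fun T _ =>
            mul_add (β T) (f S) (∑ i ∈ T \ S, (f (insert i S) - f S)),
            Finset.sum_add_distrib, ← Finset.sum_mul, hβ1, one_mul, hswap]
  · -- fstar ≤ (1 - 1/e)⁻¹ * multilinear
    set c := fstar f x with hc
    set M := multilinear f x with hM
    set ψ : ℝ → ℝ := fun t => Real.exp t * (phi f x t - c) with hψ
    have hasDψ : ∀ t : ℝ, HasDerivAt ψ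
        (Real.exp t * (phi f x t - c)
          + Real.exp t * (∑ S : Finset (Fin n), gd x S t * f S)) t := by
      intro t
      exact (Real.hasDerivAt_exp t).mul ((hasDeriv_phi f x t).sub_const c)
    have hmonoψ : MonotoneOn ψ (Set.Icc 0 1) := by
      refine monotoneOn_of_deriv_nonneg (convex_Icc 0 1) ?_ ?_ ?_
      · exact fun t _ => (hasDψ t).differentiableAt.continuousAt.continuousWithinAt
      · exact fun t _ => (hasDψ t).differentiableAt.differentiableWithinAt
      · intro t ht
        rw [interior_Icc] at ht
        rw [(hasDψ t).deriv]
        have hkey := key_ineq f hmono x hx t ht.1.le ht.2.le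
        have hE := (Real.exp_pos t).le
        nlinarith
    have hψ01 : ψ 0 ≤ ψ 1 :=
      hmonoψ (Set.mem_Icc.mpr ⟨le_refl 0, zero_le_one⟩)
        (Set.mem_Icc.mpr ⟨zero_le_one, le_refl 1⟩) zero_le_one
    have hφ0 : 0 ≤ phi f x 0 := by
      refine Finset.sum_nonneg fun S _ => ?_
      refine mul_nonneg (mul_nonneg ?_ ?_) (hnonneg S) <;>
        exact Finset.prod_nonneg fun i _ => by nlinarith [(hx i).1, (hx i).2]
    have hφ1 : phi f x 1 = M := by
      rw [hM]
      unfold phi gprod multilinear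
      simp only [one_mul]
    have hψ01' : phi f x 0 - c ≤ Real.exp 1 * (M - c) := by
      have h := hψ01
      simp only [hψ, Real.exp_zero, one_mul, hφ1] at h
      exact h
    have he : (1:ℝ) < Real.exp 1 := by
      have := Real.exp_one_gt_d9
      linarith
    have hE : (0:ℝ) < Real.exp 1 := by linarith
    have h2 : 1 / Real.exp 1 < 1 := by
      rw [div_lt_one hE]; exact he
    have hpos : (0:ℝ) < 1 - 1 / Real.exp 1 := by linarith
    have hkey : c * Real.exp 1 - c ≤ M * Real.exp 1 := by nlinarith [hψ01', hφ0]
    have heq : (1 - 1 / Real.exp 1) * c = (c * Real.exp 1 - c) / Real.exp 1 := by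
      field_simp
    have hfin : (1 - 1 / Real.exp 1) * c ≤ M := by
      rw [heq, div_le_iff₀ hE]
      exact hkey
    calc c = (1 - 1 / Real.exp 1)⁻¹ * ((1 - 1 / Real.exp 1) * c) :=
          (inv_mul_cancel_left₀ hpos.ne' c).symm
      _ ≤ (1 - 1 / Real.exp 1)⁻¹ * M :=
          mul_le_mul_of_nonneg_left hfin (inv_nonneg.mpr hpos.le)
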